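/- Let L⁻ be a Lie algebra acting on a module M, with a positive-definite Hermitian form on Λ^q L⁻ ⊗ M making Λ^q L⁻ ⊗ M a pre-Hilbert space, and let σ-eigenspace structure be as in twisted loop algebras. Suppose x(-p)⊗v ∈ Λ^q(L⁻(g,σ)) ⊗ H ⊗ V is invariant under the reductive fixed subalgebra g^σ = g_0, acting diagonally. Then Σ_{ℓ=1}^q Σ_{b₀∈B₀} ((1/2)Σ_j (1/p_j + 1/p_ℓ) ad^j_{b₀} ad^ℓ_{b̌₀} (x(-p)) ⊗ v) + Σ_{ℓ,b₀} (1/p_ℓ) ad^ℓ_{b₀}(x(-p)) ⊗ b̌₀·v = 0, where ad^ℓ denotes the action on the ℓ-th wedge factor and B₀ is an orthonormal basis of g₀ with dual basis {b̌₀}. -/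

import Mathlib

set_option synthInstance.maxHeartbeats 400000
set_option maxHeartbeats 1000000
open scoped TensorProduct

/-- The operator `ad^ℓ_u` acting only on the `ℓ`-th wedge slot of a `q`-tuple of
elements of the (negative part of the) loop algebra, modeled as finitely supported
functions `ℕ →₀ g` (`x(-p)` is `Finsupp.single p x`). -/
noncomputable def adSlot {g : Type*} [LieRing g] [LieAlgebra ℂ g] {q : ℕ}
    (u : g) (ℓ : Fin q) (Y : Fin q → (ℕ →₀ g)) : Fin q → (ℕ →₀ g) :=
  Function.update Y ℓ (Finsupp.mapRange (fun w => ⁅u, w⁆) (lie_zero u) (Y ℓ))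

/-! ### An even derivation of the exterior algebra extending a linear endomorphism -/

noncomputable section DerMachinery

open ExteriorAlgebra

variable {V : Type*} [AddCommGroup V] [Module ℂ V]

/-- `v ↦ [[ι v, ι (f v)], [0, ι v]]`. -/
def derφ (f : V →ₗ[ℂ] V) : V →ₗ[ℂ] Matrix (Fin 2) (Fin 2) (ExteriorAlgebra ℂ V) where
  toFun v := Matrix.of ![![ι ℂ v, ι ℂ (f v)], ![0, ι ℂ v]]
  map_add' a b := by
    ext i j
    fin_cases i <;> fin_cases j <;> simp [Matrix.add_apply]
  map_smul' c a := by
    ext i j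
    fin_cases i <;> fin_cases j <;> simp [Matrix.smul_apply]

lemma derφ_00 (f : V →ₗ[ℂ] V) (w : V) : derφ f w 0 0 = ι ℂ w := rfl
lemma derφ_01 (f : V →ₗ[ℂ] V) (w : V) : derφ f w 0 1 = ι ℂ (f w) := rfl
lemma derφ_10 (f : V →ₗ[ℂ] V) (w : V) : derφ f w 1 0 = 0 := rfl
lemma derφ_11 (f : V →ₗ[ℂ] V) (w : V) : derφ f w 1 1 = ι ℂ w := rfl

lemma derφ_sq (f : V →ₗ[ℂ] V) (w : V) : derφ f w * derφ f w = 0 := by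
  ext i j
  rw [Matrix.mul_apply, Fin.sum_univ_two]
  fin_cases i <;> fin_cases j <;>
    simp [derφ_00, derφ_01, derφ_10, derφ_11, ι_sq_zero, ι_add_mul_swap]

def Φder (f : V →ₗ[ℂ] V) :
    ExteriorAlgebra ℂ V →ₐ[ℂ] Matrix (Fin 2) (Fin 2) (ExteriorAlgebra ℂ V) :=
  lift ℂ ⟨derφ f, derφ_sq f⟩

lemma Φder_ι (f : V →ₗ[ℂ] V) (w : V) : Φder f (ι ℂ w) = derφ f w :=
  lift_ι_apply ℂ _ _ _

lemma Φder_entries (f : V →ₗ[ℂ] V) (a : ExteriorAlgebra ℂ V) :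
    Φder f a 1 0 = 0 ∧ Φder f a 0 0 = a ∧ Φder f a 1 1 = a := by
  induction a using ExteriorAlgebra.induction with
  | algebraMap r =>
    rw [AlgHom.commutes]
    refine ⟨?_, ?_, ?_⟩ <;> simp [Matrix.algebraMap_matrix_apply]
  | ι x => rw [Φder_ι]; exact ⟨derφ_10 f x, derφ_00 f x, derφ_11 f x⟩
  | mul a b ha hb =>
    obtain ⟨ha10, ha00, ha11⟩ := ha
    obtain ⟨hb10, hb00, hb11⟩ := hb
    rw [map_mul]
    refine ⟨?_, ?_, ?_⟩ <;>
      rw [Matrix.mul_apply, Fin.sum_univ_two] <;>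
      simp [ha10, ha00, ha11, hb10, hb00, hb11]
  | add a b ha hb =>
    obtain ⟨ha10, ha00, ha11⟩ := ha
    obtain ⟨hb10, hb00, hb11⟩ := hb
    rw [map_add]
    exact ⟨by simp [Matrix.add_apply, ha10, hb10],
      by simp [Matrix.add_apply, ha00, hb00],
      by simp [Matrix.add_apply, ha11, hb11]⟩

/-- The even derivation of the exterior algebra extending `f`. -/
def Der (f : V →ₗ[ℂ] V) : ExteriorAlgebra ℂ V →ₗ[ℂ] ExteriorAlgebra ℂ V where
  toFun a := Φder f a 0 1
  map_add' a b := by simp [Matrix.add_apply]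
  map_smul' c a := by simp [Matrix.smul_apply]

lemma Der_ι (f : V →ₗ[ℂ] V) (w : V) : Der f (ι ℂ w) = ι ℂ (f w) := by
  show Φder f (ι ℂ w) 0 1 = _
  rw [Φder_ι, derφ_01]

lemma Der_one (f : V →ₗ[ℂ] V) : Der f 1 = 0 := by
  show Φder f 1 0 1 = 0
  rw [map_one]
  exact Matrix.one_apply_ne (by decide)

lemma Der_mul (f : V →ₗ[ℂ] V) (a b : ExteriorAlgebra ℂ V) :
    Der f (a * b) = a * Der f b + Der f a * b := by
  show Φder f (a * b) 0 1 = a * Φder f b 0 1 + Φder f a 0 1 * b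
  obtain ⟨ha10, ha00, ha11⟩ := Φder_entries f a
  obtain ⟨hb10, hb00, hb11⟩ := Φder_entries f b
  rw [map_mul, Matrix.mul_apply, Fin.sum_univ_two, ha00, hb11]

lemma Der_ιMulti (f : V →ₗ[ℂ] V) (q : ℕ) (Y : Fin q → V) :
    Der f (ιMulti ℂ q Y) = ∑ ℓ : Fin q, ιMulti ℂ q (Function.update Y ℓ (f (Y ℓ))) := by
  induction q with
  | zero => rw [ιMulti_zero_apply, Der_one]; simp
  | succ n ih =>
    have h0 : ιMulti ℂ (n + 1) (Function.update Y 0 (f (Y 0)))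
        = ι ℂ (f (Y 0)) * ιMulti ℂ n (Matrix.vecTail Y) := by
      have ht : Matrix.vecTail (Function.update Y 0 (f (Y 0))) = Matrix.vecTail Y := by
        funext k
        exact Function.update_of_ne (Fin.succ_ne_zero k) (f (Y 0)) Y
      rw [ιMulti_succ_apply, ht, Function.update_self]
    have hs : ∀ i : Fin n, ιMulti ℂ (n + 1) (Function.update Y i.succ (f (Y i.succ)))
        = ι ℂ (Y 0) * ιMulti ℂ n
            (Function.update (Matrix.vecTail Y) i (f (Matrix.vecTail Y i))) := by
      intro i
      have h0' : Function.update Y i.succ (f (Y i.succ)) 0 = Y 0 :=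
        Function.update_of_ne (Fin.succ_ne_zero i).symm (f (Y i.succ)) Y
      have ht : Matrix.vecTail (Function.update Y i.succ (f (Y i.succ)))
          = Function.update (Matrix.vecTail Y) i (f (Matrix.vecTail Y i)) := by
        have h2 := Function.update_comp_eq_of_injective Y
          (Fin.succ_injective n) i (f (Y i.succ))
        simpa [Matrix.vecTail] using h2
      rw [ιMulti_succ_apply, h0', ht]
    rw [ιMulti_succ_apply, Der_mul, Der_ι, ih, Fin.sum_univ_succ, Finset.mul_sum, h0]
    simp only [hs]
    rw [add_comm]

end DerMachinery

/-! ### The Casimir symmetry -/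

theorem casimirSwap {g : Type*} [AddCommGroup g] [Module ℂ g]
    {W : Type*} [AddCommGroup W] [Module ℂ W]
    {ι₀ : Type*} [Fintype ι₀] [DecidableEq ι₀] (b₀ bd₀ : ι₀ → g)
    (B : LinearMap.BilinForm ℂ g)
    (hsymm : ∀ x y : g, B x y = B y x)
    (hdual : ∀ i j, B (b₀ i) (bd₀ j) = if i = j then (1 : ℂ) else 0)
    (hmem : ∀ j, bd₀ j ∈ Submodule.span ℂ (Set.range b₀))
    (G : g →ₗ[ℂ] g →ₗ[ℂ] W) :
    ∑ j, G (b₀ j) (bd₀ j) = ∑ j, G (bd₀ j) (b₀ j) := by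
  choose c hc using fun j => (Submodule.mem_span_range_iff_exists_fun ℂ).mp (hmem j)
  set Gm : Matrix ι₀ ι₀ ℂ := Matrix.of fun k i => B (b₀ k) (b₀ i) with hGmdef
  set C : Matrix ι₀ ι₀ ℂ := Matrix.of fun j i => c j i with hCdef
  have key : ∀ k j, (∑ i, B (b₀ k) (b₀ i) * c j i) = if k = j then (1 : ℂ) else 0 := by
    intro k j
    have h1 := hdual k j
    rw [← hc j, map_sum] at h1
    simp only [map_smul, smul_eq_mul] at h1
    rw [← h1]
    exact Finset.sum_congr rfl fun i _ => mul_comm _ _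
  have hGC : Gm * C.transpose = 1 := by
    ext k j
    rw [Matrix.mul_apply]
    simpa [Gm, C, Matrix.one_apply] using key k j
  have hCG : C.transpose * Gm = 1 := mul_eq_one_comm.mp hGC
  have hGsym : Gm.transpose = Gm := by
    ext k i
    simpa [Gm] using hsymm (b₀ i) (b₀ k)
  have hCGm : C * Gm = 1 := by
    have h2 := congrArg Matrix.transpose hGC
    rwa [Matrix.transpose_mul, Matrix.transpose_transpose, hGsym, Matrix.transpose_one] at h2
  have hCsym : C.transpose = C := by
    calc C.transpose = C.transpose * (Gm * C) := by
          rw [mul_eq_one_comm.mp hCGm, Matrix.mul_one]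
      _ = (C.transpose * Gm) * C := by rw [Matrix.mul_assoc]
      _ = C := by rw [hCG, Matrix.one_mul]
  have hcsym : ∀ j i, c j i = c i j := by
    intro j i
    have h3 := congrFun (congrFun hCsym i) j
    simpa [Matrix.transpose_apply, C] using h3
  calc ∑ j, G (b₀ j) (bd₀ j)
      = ∑ j, ∑ i, c j i • G (b₀ j) (b₀ i) := by
        refine Finset.sum_congr rfl fun j _ => ?_
        rw [← hc j, map_sum]
        simp only [map_smul]
    _ = ∑ i, ∑ j, c j i • G (b₀ j) (b₀ i) := Finset.sum_comm
    _ = ∑ i, G (bd₀ i) (b₀ i) := by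
        refine Finset.sum_congr rfl fun i _ => ?_
        rw [← hc i, map_sum, LinearMap.sum_apply]
        refine Finset.sum_congr rfl fun j _ => ?_
        rw [map_smul, LinearMap.smul_apply, hcsym j i]

/-! ### Lemmas about `adSlot` -/

section adSlotLemmas

variable {g : Type*} [LieRing g] [LieAlgebra ℂ g] {q : ℕ}

lemma mapRange_lie_add (u u' : g) (z : ℕ →₀ g) :
    Finsupp.mapRange (fun w => ⁅u + u', w⁆) (lie_zero (u + u')) z
      = Finsupp.mapRange (fun w => ⁅u, w⁆) (lie_zero u) z
        + Finsupp.mapRange (fun w => ⁅u', w⁆) (lie_zero u') z := by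
  ext n
  simp [Finsupp.mapRange_apply, add_lie]

lemma mapRange_lie_smul (cc : ℂ) (u : g) (z : ℕ →₀ g) :
    Finsupp.mapRange (fun w => ⁅cc • u, w⁆) (lie_zero (cc • u)) z
      = cc • Finsupp.mapRange (fun w => ⁅u, w⁆) (lie_zero u) z := by
  ext n
  simp [Finsupp.mapRange_apply, smul_lie]

lemma ιMulti_adSlot_add (u u' : g) (ℓ : Fin q) (Y : Fin q → (ℕ →₀ g)) :
    ExteriorAlgebra.ιMulti ℂ q (adSlot (u + u') ℓ Y)
      = ExteriorAlgebra.ιMulti ℂ q (adSlot u ℓ Y)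
        + ExteriorAlgebra.ιMulti ℂ q (adSlot u' ℓ Y) := by
  unfold adSlot
  rw [mapRange_lie_add, AlternatingMap.map_update_add]

lemma ιMulti_adSlot_smul (cc : ℂ) (u : g) (ℓ : Fin q) (Y : Fin q → (ℕ →₀ g)) :
    ExteriorAlgebra.ιMulti ℂ q (adSlot (cc • u) ℓ Y)
      = cc • ExteriorAlgebra.ιMulti ℂ q (adSlot u ℓ Y) := by
  unfold adSlot
  rw [mapRange_lie_smul, AlternatingMap.map_update_smul]

lemma adSlot_comm {ℓ ℓ' : Fin q} (h : ℓ ≠ ℓ') (u w : g) (Y : Fin q → (ℕ →₀ g)) :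
    adSlot u ℓ (adSlot w ℓ' Y) = adSlot w ℓ' (adSlot u ℓ Y) := by
  unfold adSlot
  rw [Function.update_of_ne h, Function.update_of_ne (Ne.symm h), Function.update_comm h]

/-- The weighted action `x(-n) ↦ (1/n)·[u,x](-n)` on the loop algebra. -/
noncomputable def derW (u : g) : (ℕ →₀ g) →ₗ[ℂ] (ℕ →₀ g) :=
  Finsupp.lsum ℂ fun n => (n : ℂ)⁻¹ • (Finsupp.lsingle n ∘ₗ (LieAlgebra.ad ℂ g u : g →ₗ[ℂ] g))

lemma derW_single (u : g) (n : ℕ) (y : g) :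
    derW u (Finsupp.single n y) = (n : ℂ)⁻¹ • Finsupp.single n ⁅u, y⁆ := by
  rw [derW, Finsupp.lsum_single]
  simp

end adSlotLemmas

/-- (Lemma 3.17 of the paper.)  If the pure tensor
`x₁(-p₁) ∧ … ∧ x_q(-p_q) ⊗ v ∈ Λ^q L⁻(g,σ) ⊗ M` is invariant under the diagonal action
of the fixed subalgebra `g₀ = g^σ` (with dual bases `b₀, b̌₀` of `g₀` with respect to
the invariant form `B`), then
`(1/2) Σ_{j,ℓ,ℓ'} (1/p_{ℓ'} + 1/p_ℓ) ad^{ℓ'}_{b₀ⱼ} ad^ℓ_{b̌₀ⱼ}(x⃗(-p⃗)) ⊗ v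
 + Σ_{j,ℓ} (1/p_ℓ) ad^ℓ_{b₀ⱼ}(x⃗(-p⃗)) ⊗ b̌₀ⱼ·v = 0`. -/
theorem stmt15 {g M : Type*} [LieRing g] [LieAlgebra ℂ g]
    [AddCommGroup M] [Module ℂ M]
    (m : ℕ) (hm : 0 < m) (ε : ℂ) (hε : IsPrimitiveRoot ε m)
    (σ : g →ₗ⁅ℂ⁆ g) (hord : σ.toLinearMap ^ m = 1)
    (B : LinearMap.BilinForm ℂ g)
    (hsymm : ∀ x y : g, B x y = B y x)
    (hinv : ∀ x y z : g, B ⁅x, y⁆ z = B x ⁅y, z⁆)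
    (ι₀ : Type*) [Fintype ι₀] [DecidableEq ι₀] (b₀ bd₀ : ι₀ → g)
    (hfix : ∀ j, σ (b₀ j) = b₀ j ∧ σ (bd₀ j) = bd₀ j)
    (hspan₀ : ∀ u : g, σ u = u → u ∈ Submodule.span ℂ (Set.range b₀))
    (hdual : ∀ i j, B (b₀ i) (bd₀ j) = if i = j then (1 : ℂ) else 0)
    (ρ : g →ₗ[ℂ] Module.End ℂ M)
    (hρlie : ∀ x y : g, σ x = x → σ y = y → ρ ⁅x, y⁆ = ρ x * ρ y - ρ y * ρ x)
    (q : ℕ) (x : Fin q → g) (p : Fin q → ℕ) (hp : ∀ ℓ, 0 < p ℓ)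
    (hdeg : ∀ ℓ, σ (x ℓ) = ε ^ (-(p ℓ : ℤ)) • x ℓ)
    (X : Fin q → (ℕ →₀ g)) (hX : ∀ ℓ, X ℓ = Finsupp.single (p ℓ) (x ℓ))
    (v : M)
    -- `g₀`-invariance of `x₁(-p₁) ∧ … ∧ x_q(-p_q) ⊗ v`
    (hinvar : ∀ u : g, σ u = u →
      (∑ ℓ : Fin q, (ExteriorAlgebra.ιMulti ℂ q (adSlot u ℓ X)) ⊗ₜ[ℂ] v)
        + (ExteriorAlgebra.ιMulti ℂ q X) ⊗ₜ[ℂ] (ρ u v) = 0) :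
    (∑ j : ι₀, ∑ ℓ' : Fin q, ∑ ℓ : Fin q,
        (((1 : ℂ) / 2) * ((p ℓ' : ℂ)⁻¹ + (p ℓ : ℂ)⁻¹)) •
          ((ExteriorAlgebra.ιMulti ℂ q (adSlot (b₀ j) ℓ' (adSlot (bd₀ j) ℓ X))) ⊗ₜ[ℂ] v))
      + (∑ j : ι₀, ∑ ℓ : Fin q,
          ((p ℓ : ℂ)⁻¹) •
            ((ExteriorAlgebra.ιMulti ℂ q (adSlot (b₀ j) ℓ X)) ⊗ₜ[ℂ] (ρ (bd₀ j) v))) = 0 := by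
  classical
  -- entries of the relevant tuples are "single"s in the right degree
  have hsingX : ∀ ℓ'' : Fin q, ∃ y, X ℓ'' = Finsupp.single (p ℓ'') y :=
    fun ℓ'' => ⟨x ℓ'', hX ℓ''⟩
  have hsingAd : ∀ (u : g) (ℓ ℓ'' : Fin q),
      ∃ y, adSlot u ℓ X ℓ'' = Finsupp.single (p ℓ'') y := by
    intro u ℓ ℓ''
    by_cases h : ℓ'' = ℓ
    · subst h
      refine ⟨⁅u, x ℓ''⁆, ?_⟩
      simp [adSlot, hX ℓ'', Finsupp.mapRange_single]
    · exact ⟨x ℓ'', by simp [adSlot, Function.update_of_ne h, hX ℓ'']⟩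
  -- the key formula for the weighted derivation on wedge products of "single"s
  have hDer : ∀ (u : g) (Y : Fin q → (ℕ →₀ g)),
      (∀ ℓ'', ∃ y, Y ℓ'' = Finsupp.single (p ℓ'') y) →
      Der (derW u) (ExteriorAlgebra.ιMulti ℂ q Y)
        = ∑ ℓ' : Fin q, (p ℓ' : ℂ)⁻¹ • ExteriorAlgebra.ιMulti ℂ q (adSlot u ℓ' Y) := by
    intro u Y hY
    rw [Der_ιMulti]
    refine Finset.sum_congr rfl fun ℓ' _ => ?_
    obtain ⟨y, hy⟩ := hY ℓ'
    have h1 : derW u (Y ℓ')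
        = (p ℓ' : ℂ)⁻¹ • Finsupp.mapRange (fun w => ⁅u, w⁆) (lie_zero u) (Y ℓ') := by
      rw [hy, derW_single, Finsupp.mapRange_single]
    rw [h1, AlternatingMap.map_update_smul]
    rfl
  -- the derived identity, for each j
  have hder : ∀ j : ι₀,
      (∑ ℓ' : Fin q, ∑ ℓ : Fin q, (p ℓ' : ℂ)⁻¹ •
          ((ExteriorAlgebra.ιMulti ℂ q (adSlot (b₀ j) ℓ' (adSlot (bd₀ j) ℓ X))) ⊗ₜ[ℂ] v))
        + (∑ ℓ : Fin q, (p ℓ : ℂ)⁻¹ •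
            ((ExteriorAlgebra.ιMulti ℂ q (adSlot (b₀ j) ℓ X)) ⊗ₜ[ℂ] (ρ (bd₀ j) v))) = 0 := by
    intro j
    have h := congrArg (LinearMap.rTensor M (Der (derW (b₀ j)))) (hinvar (bd₀ j) (hfix j).2)
    rw [map_add, map_sum, map_zero] at h
    simp only [LinearMap.rTensor_tmul] at h
    rw [hDer (b₀ j) X hsingX] at h
    have h2 : ∀ ℓ : Fin q, Der (derW (b₀ j)) (ExteriorAlgebra.ιMulti ℂ q (adSlot (bd₀ j) ℓ X))
        = ∑ ℓ' : Fin q, (p ℓ' : ℂ)⁻¹ •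
            ExteriorAlgebra.ιMulti ℂ q (adSlot (b₀ j) ℓ' (adSlot (bd₀ j) ℓ X)) :=
      fun ℓ => hDer (b₀ j) _ (hsingAd (bd₀ j) ℓ)
    simp only [h2] at h
    simp only [TensorProduct.sum_tmul, ← TensorProduct.smul_tmul'] at h
    rw [Finset.sum_comm]
    exact h
  -- the Casimir swap
  have hmem : ∀ j, bd₀ j ∈ Submodule.span ℂ (Set.range b₀) :=
    fun j => hspan₀ _ (hfix j).2
  have swapS : ∀ ℓ' ℓ : Fin q,
      (∑ j : ι₀, ExteriorAlgebra.ιMulti ℂ q (adSlot (b₀ j) ℓ' (adSlot (bd₀ j) ℓ X)))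
        = ∑ j : ι₀, ExteriorAlgebra.ιMulti ℂ q (adSlot (b₀ j) ℓ (adSlot (bd₀ j) ℓ' X)) := by
    intro ℓ' ℓ
    rcases eq_or_ne ℓ' ℓ with h | h
    · rw [h]
    · set G : g →ₗ[ℂ] g →ₗ[ℂ] ExteriorAlgebra ℂ (ℕ →₀ g) :=
        LinearMap.mk₂ ℂ (fun u w => ExteriorAlgebra.ιMulti ℂ q (adSlot w ℓ (adSlot u ℓ' X)))
          (fun u u' w => by
            rw [adSlot_comm (Ne.symm h), ← adSlot_comm h u w X, ← adSlot_comm h u' w X,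
              ιMulti_adSlot_add])
          (fun cc u w => by
            rw [adSlot_comm (Ne.symm h), ← adSlot_comm h u w X, ιMulti_adSlot_smul])
          (fun u w w' => by rw [ιMulti_adSlot_add])
          (fun cc u w => by rw [ιMulti_adSlot_smul]) with hG
      have hcas := casimirSwap b₀ bd₀ B hsymm hdual hmem G
      simp only [hG, LinearMap.mk₂_apply] at hcas
      calc (∑ j : ι₀, ExteriorAlgebra.ιMulti ℂ q (adSlot (b₀ j) ℓ' (adSlot (bd₀ j) ℓ X)))
          = ∑ j : ι₀, ExteriorAlgebra.ιMulti ℂ q (adSlot (bd₀ j) ℓ (adSlot (b₀ j) ℓ' X)) :=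
            Finset.sum_congr rfl fun j _ => by rw [adSlot_comm h]
        _ = ∑ j : ι₀, ExteriorAlgebra.ιMulti ℂ q (adSlot (b₀ j) ℓ (adSlot (bd₀ j) ℓ' X)) := hcas
  -- reordering sums
  have reorder : ∀ c : Fin q → Fin q → ℂ,
      (∑ j : ι₀, ∑ ℓ' : Fin q, ∑ ℓ : Fin q, (c ℓ' ℓ) •
          ((ExteriorAlgebra.ιMulti ℂ q (adSlot (b₀ j) ℓ' (adSlot (bd₀ j) ℓ X))) ⊗ₜ[ℂ] v))
        = ∑ ℓ' : Fin q, ∑ ℓ : Fin q, (c ℓ' ℓ) •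
            ((∑ j : ι₀, ExteriorAlgebra.ιMulti ℂ q (adSlot (b₀ j) ℓ' (adSlot (bd₀ j) ℓ X)))
              ⊗ₜ[ℂ] v) := by
    intro c
    rw [Finset.sum_comm]
    refine Finset.sum_congr rfl fun ℓ' _ => ?_
    rw [Finset.sum_comm]
    refine Finset.sum_congr rfl fun ℓ _ => ?_
    rw [← Finset.smul_sum, ← TensorProduct.sum_tmul]
  -- the first (double-ad) summand of the goal, rewritten with weight `1/p ℓ'`
  have hA : (∑ j : ι₀, ∑ ℓ' : Fin q, ∑ ℓ : Fin q,
        (((1 : ℂ) / 2) * ((p ℓ' : ℂ)⁻¹ + (p ℓ : ℂ)⁻¹)) •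
          ((ExteriorAlgebra.ιMulti ℂ q (adSlot (b₀ j) ℓ' (adSlot (bd₀ j) ℓ X))) ⊗ₜ[ℂ] v))
      = ∑ j : ι₀, ∑ ℓ' : Fin q, ∑ ℓ : Fin q, (p ℓ' : ℂ)⁻¹ •
          ((ExteriorAlgebra.ιMulti ℂ q (adSlot (b₀ j) ℓ' (adSlot (bd₀ j) ℓ X))) ⊗ₜ[ℂ] v) := by
    rw [reorder (fun ℓ' ℓ => ((1 : ℂ) / 2) * ((p ℓ' : ℂ)⁻¹ + (p ℓ : ℂ)⁻¹)),
      reorder (fun ℓ' ℓ => (p ℓ' : ℂ)⁻¹)]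
    have hsplit : ∀ ℓ' ℓ : Fin q, ∀ t : (ExteriorAlgebra ℂ (ℕ →₀ g)) ⊗[ℂ] M,
        (((1 : ℂ) / 2) * ((p ℓ' : ℂ)⁻¹ + (p ℓ : ℂ)⁻¹)) • t
          = (((1 : ℂ) / 2) * (p ℓ' : ℂ)⁻¹) • t + (((1 : ℂ) / 2) * (p ℓ : ℂ)⁻¹) • t := by
      intro ℓ' ℓ t
      rw [mul_add, add_smul]
    simp only [hsplit]
    simp only [Finset.sum_add_distrib]
    have hsecond : (∑ ℓ' : Fin q, ∑ ℓ : Fin q, (((1 : ℂ) / 2) * (p ℓ : ℂ)⁻¹) •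
          ((∑ j : ι₀, ExteriorAlgebra.ιMulti ℂ q (adSlot (b₀ j) ℓ' (adSlot (bd₀ j) ℓ X)))
            ⊗ₜ[ℂ] v))
        = ∑ ℓ' : Fin q, ∑ ℓ : Fin q, (((1 : ℂ) / 2) * (p ℓ' : ℂ)⁻¹) •
            ((∑ j : ι₀, ExteriorAlgebra.ιMulti ℂ q (adSlot (b₀ j) ℓ' (adSlot (bd₀ j) ℓ X)))
              ⊗ₜ[ℂ] v) := by
      rw [Finset.sum_comm]
      refine Finset.sum_congr rfl fun ℓ' _ => Finset.sum_congr rfl fun ℓ _ => ?_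
      rw [swapS ℓ ℓ']
    rw [hsecond, ← Finset.sum_add_distrib]
    refine Finset.sum_congr rfl fun ℓ' _ => ?_
    rw [← Finset.sum_add_distrib]
    refine Finset.sum_congr rfl fun ℓ _ => ?_
    rw [← add_smul]
    congr 1
    ring
  rw [hA]
  have hfin : ∀ j : ι₀,
      (∑ ℓ' : Fin q, ∑ ℓ : Fin q, (p ℓ' : ℂ)⁻¹ •
          ((ExteriorAlgebra.ιMulti ℂ q (adSlot (b₀ j) ℓ' (adSlot (bd₀ j) ℓ X))) ⊗ₜ[ℂ] v))
        + (∑ ℓ : Fin q, (p ℓ : ℂ)⁻¹ •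
            ((ExteriorAlgebra.ιMulti ℂ q (adSlot (b₀ j) ℓ X)) ⊗ₜ[ℂ] (ρ (bd₀ j) v))) = 0 :=
    hder
  calc (∑ j : ι₀, ∑ ℓ' : Fin q, ∑ ℓ : Fin q, (p ℓ' : ℂ)⁻¹ •
          ((ExteriorAlgebra.ιMulti ℂ q (adSlot (b₀ j) ℓ' (adSlot (bd₀ j) ℓ X))) ⊗ₜ[ℂ] v))
      + (∑ j : ι₀, ∑ ℓ : Fin q, ((p ℓ : ℂ)⁻¹) •
          ((ExteriorAlgebra.ιMulti ℂ q (adSlot (b₀ j) ℓ X)) ⊗ₜ[ℂ] (ρ (bd₀ j) v)))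
      = ∑ j : ι₀,
          ((∑ ℓ' : Fin q, ∑ ℓ : Fin q, (p ℓ' : ℂ)⁻¹ •
            ((ExteriorAlgebra.ιMulti ℂ q (adSlot (b₀ j) ℓ' (adSlot (bd₀ j) ℓ X))) ⊗ₜ[ℂ] v))
          + (∑ ℓ : Fin q, (p ℓ : ℂ)⁻¹ •
            ((ExteriorAlgebra.ιMulti ℂ q (adSlot (b₀ j) ℓ X)) ⊗ₜ[ℂ] (ρ (bd₀ j) v)))) := by
        rw [Finset.sum_add_distrib]
    _ = ∑ j : ι₀, (0 : (ExteriorAlgebra ℂ (ℕ →₀ g)) ⊗[ℂ] M) :=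
        Finset.sum_congr rfl fun j _ => hfin j
    _ = 0 := Finset.sum_const_zero
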